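/- (Proposition 3.3, square-integrability condition with u = −s.) Assume the Mecke identity with Papangelou intensity r, and assume: a : X×X → [0,∞) is measurable, symmetric (a(x,y) = a(y,x)), bounded, with sup_{x∈X} ∫_X a(x,y) ν(dy) < ∞; j : X → [0,∞) is measurable with r(x,γ) ≤ j(x) for all x ∈ X and γ ∈ Γ, with ∫_Λ j dν < ∞ for every Λ ∈ B₀(X), and sup_{x ∈ X\Λ₀} j(x) < ∞ for some Λ₀ ∈ B₀(X). For s ∈ [0,1] define c_s(x,y,γ) := a(x,y)·r(x,γ)^{s−1}·r(y,γ)^{s}·𝟙{r(x,γ)>0 and r(y,γ)>0}. Then for every s ∈ [0,1] and every Λ ∈ B₀(X), the function γ ↦ ∫_Λ ∑_{y∈γ∩Λ} r(x,γ\{y})·r(y,γ\{y})^{−s}·𝟙{r(y,γ\{y})>0}·c_s(x,y,γ\{y}) ν(dx) is square-integrable with respect to μ. -/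

import Mathlib

open MeasureTheory Set ENNReal Filter Topology

noncomputable section

/-- The configuration space over `X`: the set of all locally finite subsets of `X`. -/
def Config (X : Type*) [TopologicalSpace X] : Type _ :=
  {γ : Set X // ∀ K : Set X, IsCompact K → (γ ∩ K).Finite}

namespace Config

variable {X : Type*} [TopologicalSpace X]

/-- Removal of a point from a configuration, `γ \ {x}`. -/
def erase (γ : Config X) (x : X) : Config X :=
  ⟨γ.1 \ {x}, fun K hK => (γ.2 K hK).subset fun _ hz => ⟨hz.1.1, hz.2⟩⟩

/-- Insertion of a point into a configuration, `γ ∪ {x}`. -/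
def ins (γ : Config X) (x : X) : Config X :=
  ⟨insert x γ.1, fun K hK => ((γ.2 K hK).insert x).subset (by
    rintro z ⟨hz1, hz2⟩
    rcases Set.mem_insert_iff.mp hz1 with rfl | h
    · exact Set.mem_insert _ _
    · exact Set.mem_insert_of_mem _ ⟨h, hz2⟩)⟩

end Config

variable {X : Type*} [TopologicalSpace X]

/-- Cylinder functions `FC_b`: `F(γ) = g(⟨φ₁,γ⟩, …, ⟨φ_N,γ⟩)` with the `φᵢ` continuous
with compact support and `g` bounded continuous; here `⟨φ,γ⟩ = ∑_{x∈γ} φ(x)`. -/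
def IsCylinder (F : Config X → ℝ) : Prop :=
  ∃ (N : ℕ) (φ : Fin N → X → ℝ) (g : (Fin N → ℝ) → ℝ),
    (∀ i, Continuous (φ i)) ∧ (∀ i, HasCompactSupport (φ i)) ∧
      Continuous g ∧ (∃ C : ℝ, ∀ v, |g v| ≤ C) ∧
      ∀ γ : Config X, F γ = g fun i => ∑' x : γ.1, φ i x

/-- `(D_x^- F)(γ) = F(γ \ {x}) - F(γ)`. -/
def Dm (F : Config X → ℝ) (x : X) (γ : Config X) : ℝ := F (γ.erase x) - F γ

/-- `(D_x^+ F)(γ) = F(γ ∪ {x}) - F(γ)`. -/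
def Dp (F : Config X → ℝ) (x : X) (γ : Config X) : ℝ := F (γ.ins x) - F γ

/-- `(D_{xy}^{-+} F)(γ) = F((γ \ {x}) ∪ {y}) - F(γ)`. -/
def Dpm (F : Config X → ℝ) (x y : X) (γ : Config X) : ℝ := F ((γ.erase x).ins y) - F γ

variable [MeasurableSpace X]

/-- `Λ ∈ B₀(X)`: a relatively compact Borel set. -/
def IsB0 (Λ : Set X) : Prop := MeasurableSet Λ ∧ IsCompact (closure Λ)

/-- The σ-algebra on `Config X` generated by the counting maps `γ ↦ |γ ∩ Λ|`, `Λ ∈ B₀(X)`. -/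
instance : MeasurableSpace (Config X) :=
  ⨆ (Λ : Set X) (_ : IsB0 Λ),
    MeasurableSpace.comap (fun γ : Config X => (γ.1 ∩ Λ).ncard) ⊤

/-- The Mecke identity: `r` is a Papangelou intensity for `μ`, i.e.
`∫ ∑_{x∈γ} H(x,γ) μ(dγ) = ∫ ∫ r(x,γ) H(x,γ∪{x}) ν(dx) μ(dγ)` for measurable `H ≥ 0`. -/
def MeckeIdentity (ν : Measure X) (μ : Measure (Config X)) (r : X → Config X → ℝ) : Prop :=
  ∀ H : X → Config X → ℝ≥0∞, Measurable (fun p : X × Config X => H p.1 p.2) →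
    ∫⁻ γ, ∑' x : γ.1, H (x : X) γ ∂μ =
      ∫⁻ γ, ∫⁻ x, ENNReal.ofReal (r x γ) * H x (γ.ins x) ∂ν ∂μ

/-- Condition (G1): `∫ ∑_{x∈γ∩Λ} d(x,γ\{x}) μ(dγ) < ∞` for every `Λ ∈ B₀(X)`. -/
def CondG1 (μ : Measure (Config X)) (d : X → Config X → ℝ) : Prop :=
  ∀ Λ : Set X, IsB0 Λ →
    ∫⁻ γ, ∑' x : ↥(γ.1 ∩ Λ), ENNReal.ofReal (d (x : X) (γ.erase (x : X))) ∂μ < ⊤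

/-- Condition (K1): `∫ ∑_{x∈γ} ∫ c(x,y,γ\{x})(χ_Λ(x)+χ_Λ(y)) ν(dy) μ(dγ) < ∞`
for every `Λ ∈ B₀(X)`. -/
def CondK1 (ν : Measure X) (μ : Measure (Config X)) (c : X → X → Config X → ℝ) : Prop :=
  ∀ Λ : Set X, IsB0 Λ →
    ∫⁻ γ, ∑' x : γ.1, ∫⁻ y,
        ENNReal.ofReal (c (x : X) y (γ.erase (x : X))) *
          (Λ.indicator (1 : X → ℝ≥0∞) (x : X) + Λ.indicator (1 : X → ℝ≥0∞) y) ∂ν ∂μ < ⊤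

/-- The Glauber Dirichlet form `ℰ_G(F,G)`. -/
def glauberE (μ : Measure (Config X)) (d : X → Config X → ℝ) (F G : Config X → ℝ) : ℝ :=
  ∫ γ, (∑' x : γ.1, d (x : X) (γ.erase (x : X)) * Dm F (x : X) γ * Dm G (x : X) γ) ∂μ

/-- The Kawasaki Dirichlet form `ℰ_K(F,G)`. -/
def kawasakiE (ν : Measure X) (μ : Measure (Config X)) (c : X → X → Config X → ℝ)
    (F G : Config X → ℝ) : ℝ :=
  ∫ γ, (∑' x : γ.1, ∫ y, c (x : X) y (γ.erase (x : X)) * Dpm F (x : X) y γ *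
    Dpm G (x : X) y γ ∂ν) ∂μ

/-- Proposition 3.3, square-integrability condition (2.2) with `u = −s`: for the rate
`c_s(x,y,γ) = a(x,y)·r(x,γ)^{s−1}·r(y,γ)^{s}·𝟙{r(x,γ)>0 ∧ r(y,γ)>0}`, `s ∈ [0,1]`,
the function `γ ↦ ∫_Λ ∑_{y∈γ∩Λ} r(x,γ\{y})·r(y,γ\{y})^{−s}·𝟙{r(y,γ\{y})>0}·c_s(x,y,γ\{y}) ν(dx)`
is square-integrable with respect to `μ` for every `Λ ∈ B₀(X)`. -/
theorem example_rate_cond2 {X : Type*} [TopologicalSpace X]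
    [LocallyCompactSpace X] [SecondCountableTopology X] [T2Space X]
    [MeasurableSpace X] [BorelSpace X]
    (ν : Measure X) [ν.Regular] [NullSingletonClass ν]
    (μ : Measure (Config X)) [IsProbabilityMeasure μ]
    (r : X → Config X → ℝ) (hr0 : ∀ x γ, 0 ≤ r x γ)
    (hrm : Measurable fun p : X × Config X => r p.1 p.2)
    (hMecke : MeckeIdentity ν μ r)
    (a : X → X → ℝ) (ha0 : ∀ x y, 0 ≤ a x y) (hasym : ∀ x y, a x y = a y x)
    (ham : Measurable fun p : X × X => a p.1 p.2)
    (habdd : ∃ M : ℝ, ∀ x y, a x y ≤ M)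
    (haint : ⨆ x, ∫⁻ y, ENNReal.ofReal (a x y) ∂ν < ⊤)
    (j : X → ℝ) (hj0 : ∀ x, 0 ≤ j x) (hjm : Measurable j)
    (hrj : ∀ x γ, r x γ ≤ j x)
    (hjint : ∀ Λ : Set X, IsB0 Λ → ∫⁻ x in Λ, ENNReal.ofReal (j x) ∂ν < ⊤)
    (hjbdd : ∃ Λ₀ : Set X, IsB0 Λ₀ ∧ ∃ M : ℝ, ∀ x ∉ Λ₀, j x ≤ M)
    (s : ℝ) (hs : s ∈ Set.Icc (0 : ℝ) 1)
    (c : X → X → Config X → ℝ)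
    (hc : ∀ x y γ, c x y γ =
      if 0 < r x γ ∧ 0 < r y γ then a x y * r x γ ^ (s - 1) * r y γ ^ s else 0) :
    ∀ Λ : Set X, IsB0 Λ →
      ∫⁻ γ, (∫⁻ x in Λ, ∑' y : ↥(γ.1 ∩ Λ),
          ENNReal.ofReal (if 0 < r (y : X) (γ.erase (y : X)) then
            r x (γ.erase (y : X)) * r (y : X) (γ.erase (y : X)) ^ (-s) *
              c x (y : X) (γ.erase (y : X)) else 0) ∂ν) ^ 2 ∂μ < ⊤ := by
  intro Λ hΛ
  classical
  obtain ⟨M, hM⟩ := habdd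
  set M' : ℝ := max M 0 with hM'def
  have hM'0 : 0 ≤ M' := le_max_right _ _
  -- the counting function
  set N : Config X → ℝ≥0∞ := fun γ => ∑' _ : ↥(γ.1 ∩ Λ), (1 : ℝ≥0∞) with hNdef
  have hfin : ∀ γ : Config X, (γ.1 ∩ Λ).Finite := fun γ =>
    (γ.2 (closure Λ) hΛ.2).subset (Set.inter_subset_inter_right _ subset_closure)
  have hNcard : ∀ γ, N γ = ((γ.1 ∩ Λ).ncard : ℝ≥0∞) := by
    intro γ
    have hft := (hfin γ).fintype
    simp only [hNdef]
    rw [tsum_fintype]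
    rw [Finset.sum_const, Finset.card_univ, Set.ncard_eq_toFinset_card', Set.toFinset_card]
    simp
  have hNne : ∀ γ, N γ ≠ ⊤ := fun γ => by rw [hNcard]; exact ENNReal.natCast_ne_top _
  have hcount : Measurable fun γ : Config X => (γ.1 ∩ Λ).ncard := by
    intro t _
    have hle : MeasurableSpace.comap (fun γ : Config X => (γ.1 ∩ Λ).ncard) ⊤ ≤
        (inferInstance : MeasurableSpace (Config X)) :=
      le_iSup₂ (f := fun (Λ : Set X) (_ : IsB0 Λ) =>
        MeasurableSpace.comap (fun γ : Config X => (γ.1 ∩ Λ).ncard) ⊤) Λ hΛ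
    exact hle _ ⟨t, trivial, rfl⟩
  have hNmeas : Measurable N := by
    have : N = (fun n : ℕ => (n : ℝ≥0∞)) ∘ fun γ : Config X => (γ.1 ∩ Λ).ncard :=
      funext hNcard
    rw [this]
    exact measurable_from_top.comp hcount
  set J : ℝ≥0∞ := ∫⁻ x in Λ, ENNReal.ofReal (j x) ∂ν with hJdef
  have hJ : J < ⊤ := hjint Λ hΛ
  -- ∫ N dμ ≤ J
  have hH1 : Measurable fun p : X × Config X => Λ.indicator (1 : X → ℝ≥0∞) p.1 :=
    (measurable_one.indicator hΛ.1).comp measurable_fst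
  have hsumN : ∀ γ : Config X, (∑' x : γ.1, Λ.indicator (1 : X → ℝ≥0∞) (x : X)) = N γ := by
    intro γ
    simp only [hNdef]
    rw [tsum_subtype γ.1 (Λ.indicator (1 : X → ℝ≥0∞)),
      tsum_subtype (γ.1 ∩ Λ) (fun _ => (1 : ℝ≥0∞))]
    simp only [Set.indicator_indicator]
    rfl
  have hptr : ∀ (x : X) (γ : Config X),
      ENNReal.ofReal (r x γ) * Λ.indicator (1 : X → ℝ≥0∞) x ≤
        Λ.indicator (fun x => ENNReal.ofReal (j x)) x := by
    intro x γ
    by_cases hx : x ∈ Λ <;>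
      simp [hx, ENNReal.ofReal_le_ofReal (hrj x γ)]
  have hNint : ∫⁻ γ, N γ ∂μ ≤ J := by
    have h1 := hMecke (fun x _ => Λ.indicator (1 : X → ℝ≥0∞) x) hH1
    calc ∫⁻ γ, N γ ∂μ = ∫⁻ γ, ∑' x : γ.1, Λ.indicator (1 : X → ℝ≥0∞) (x : X) ∂μ := by
          simp_rw [hsumN]
      _ = ∫⁻ γ, ∫⁻ x, ENNReal.ofReal (r x γ) * Λ.indicator (1 : X → ℝ≥0∞) x ∂ν ∂μ := h1
      _ ≤ ∫⁻ _, J ∂μ := by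
          refine lintegral_mono fun γ => ?_
          calc ∫⁻ x, ENNReal.ofReal (r x γ) * Λ.indicator (1 : X → ℝ≥0∞) x ∂ν
              ≤ ∫⁻ x, Λ.indicator (fun x => ENNReal.ofReal (j x)) x ∂ν :=
                lintegral_mono fun x => hptr x γ
            _ = J := by rw [hJdef, lintegral_indicator hΛ.1 _]
      _ = J := by simp
  -- ∫ N² dμ ≤ J * (J + 1)
  have hNins : ∀ (γ : Config X) (x : X), N (γ.ins x) ≤ N γ + 1 := by
    intro γ x
    rw [hNcard, hNcard]
    have hsub : (γ.ins x).1 ∩ Λ ⊆ insert x (γ.1 ∩ Λ) := by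
      rintro z ⟨hz1, hz2⟩
      rcases Set.mem_insert_iff.mp hz1 with rfl | h
      · exact Set.mem_insert _ _
      · exact Set.mem_insert_of_mem _ ⟨h, hz2⟩
    have h1 : ((γ.ins x).1 ∩ Λ).ncard ≤ (insert x (γ.1 ∩ Λ)).ncard :=
      Set.ncard_le_ncard hsub ((hfin γ).insert x)
    have h2 : (insert x (γ.1 ∩ Λ)).ncard ≤ (γ.1 ∩ Λ).ncard + 1 := Set.ncard_insert_le _ _
    exact_mod_cast h1.trans h2
  have hN2 : ∫⁻ γ, N γ * N γ ∂μ ≤ J * (J + 1) := by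
    have hH2 : Measurable fun p : X × Config X =>
        Λ.indicator (1 : X → ℝ≥0∞) p.1 * N p.2 :=
      hH1.mul (hNmeas.comp measurable_snd)
    have h2 := hMecke (fun x γ => Λ.indicator (1 : X → ℝ≥0∞) x * N γ) hH2
    calc ∫⁻ γ, N γ * N γ ∂μ
        = ∫⁻ γ, ∑' x : γ.1, Λ.indicator (1 : X → ℝ≥0∞) (x : X) * N γ ∂μ := by
          refine lintegral_congr fun γ => ?_
          rw [ENNReal.tsum_mul_right, hsumN]
      _ = ∫⁻ γ, ∫⁻ x, ENNReal.ofReal (r x γ) *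
            (Λ.indicator (1 : X → ℝ≥0∞) x * N (γ.ins x)) ∂ν ∂μ := h2
      _ ≤ ∫⁻ γ, J * (N γ + 1) ∂μ := by
          refine lintegral_mono fun γ => ?_
          calc ∫⁻ x, ENNReal.ofReal (r x γ) * (Λ.indicator (1 : X → ℝ≥0∞) x * N (γ.ins x)) ∂ν
              ≤ ∫⁻ x, Λ.indicator (fun x => ENNReal.ofReal (j x)) x * (N γ + 1) ∂ν := by
                refine lintegral_mono fun x => ?_
                by_cases hx : x ∈ Λ
                · simp only [hx, Set.indicator_of_mem, Pi.one_apply, one_mul]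
                  exact mul_le_mul' (ENNReal.ofReal_le_ofReal (hrj x γ)) (hNins γ x)
                · simp [hx]
            _ = J * (N γ + 1) := by
                rw [lintegral_mul_const' _ _ (by simp [hNne γ]), hJdef,
                  lintegral_indicator hΛ.1 _]
      _ = J * (∫⁻ γ, N γ ∂μ + 1) := by
          rw [lintegral_const_mul' _ _ hJ.ne, lintegral_add_right _ measurable_const]
          simp
      _ ≤ J * (J + 1) := by
          exact mul_le_mul_right (add_le_add_left hNint 1) J
  -- pointwise bound on the rate
  have key : ∀ (x y : X) (γ' : Config X),
      (if 0 < r y γ' then r x γ' * r y γ' ^ (-s) * c x y γ' else 0) ≤ M' * (1 + j x) := by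
    intro x y γ'
    have h1j : (0 : ℝ) ≤ 1 + j x := by have := hj0 x; linarith
    have hrs : r x γ' ^ s ≤ 1 + j x := by
      have h1 : r x γ' ^ s ≤ j x ^ s := Real.rpow_le_rpow (hr0 _ _) (hrj _ _) hs.1
      have h2 : j x ^ s ≤ 1 + j x := by
        rcases le_total (j x) 1 with h | h
        · have := Real.rpow_le_one (hj0 x) h hs.1
          linarith [hj0 x]
        · have h3 := Real.rpow_le_rpow_of_exponent_le h hs.2
          rw [Real.rpow_one] at h3
          linarith
      linarith
    split_ifs with hy
    · rw [hc]
      split_ifs with hxy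
      · obtain ⟨hx, hy'⟩ := hxy
        have e1 : r x γ' * r x γ' ^ (s - 1) = r x γ' ^ s := by
          rw [show s = 1 + (s - 1) by ring]
          rw [Real.rpow_add hx, Real.rpow_one]
          ring_nf
        have e2 : r y γ' ^ (-s) * r y γ' ^ s = 1 := by
          rw [← Real.rpow_add hy]
          simp
        have hval : r x γ' * r y γ' ^ (-s) * (a x y * r x γ' ^ (s - 1) * r y γ' ^ s)
            = a x y * (r x γ' * r x γ' ^ (s - 1)) * (r y γ' ^ (-s) * r y γ' ^ s) := by
          ring
        rw [hval, e1, e2, mul_one]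
        have haM : a x y ≤ M' := (hM x y).trans (le_max_left _ _)
        have hrs0 : 0 ≤ r x γ' ^ s := Real.rpow_nonneg (hr0 _ _) _
        exact mul_le_mul haM hrs (hrs0) hM'0
      · rw [mul_zero]
        positivity
    · positivity
  -- the constant C
  set C : ℝ≥0∞ := ∫⁻ x in Λ, ENNReal.ofReal (M' * (1 + j x)) ∂ν with hCdef
  have hC : C < ⊤ := by
    have heq : ∀ x : X, ENNReal.ofReal (M' * (1 + j x)) =
        ENNReal.ofReal M' * (1 + ENNReal.ofReal (j x)) := by
      intro x
      rw [ENNReal.ofReal_mul hM'0, ENNReal.ofReal_add zero_le_one (hj0 x), ENNReal.ofReal_one]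
    calc C = ENNReal.ofReal M' * ∫⁻ x in Λ, (1 + ENNReal.ofReal (j x)) ∂ν := by
          rw [hCdef]
          simp_rw [heq]
          rw [lintegral_const_mul' _ _ ENNReal.ofReal_ne_top]
      _ = ENNReal.ofReal M' * (ν Λ + J) := by
          rw [lintegral_add_left measurable_const, hJdef]
          simp
      _ < ⊤ := by
          have hνΛ : ν Λ < ⊤ :=
            lt_of_le_of_lt (measure_mono subset_closure) hΛ.2.measure_lt_top
          exact ENNReal.mul_lt_top ENNReal.ofReal_lt_top (ENNReal.add_lt_top.mpr ⟨hνΛ, hJ⟩)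
  -- inner integral bound
  have hinner : ∀ γ : Config X,
      (∫⁻ x in Λ, ∑' y : ↥(γ.1 ∩ Λ),
          ENNReal.ofReal (if 0 < r (y : X) (γ.erase (y : X)) then
            r x (γ.erase (y : X)) * r (y : X) (γ.erase (y : X)) ^ (-s) *
              c x (y : X) (γ.erase (y : X)) else 0) ∂ν) ≤ N γ * C := by
    intro γ
    calc (∫⁻ x in Λ, ∑' y : ↥(γ.1 ∩ Λ),
          ENNReal.ofReal (if 0 < r (y : X) (γ.erase (y : X)) then
            r x (γ.erase (y : X)) * r (y : X) (γ.erase (y : X)) ^ (-s) *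
              c x (y : X) (γ.erase (y : X)) else 0) ∂ν)
        ≤ ∫⁻ x in Λ, ∑' _ : ↥(γ.1 ∩ Λ), ENNReal.ofReal (M' * (1 + j x)) ∂ν := by
          refine lintegral_mono fun x => ENNReal.tsum_le_tsum fun y => ?_
          exact ENNReal.ofReal_le_ofReal (key x (y : X) (γ.erase (y : X)))
      _ = ∫⁻ x in Λ, N γ * ENNReal.ofReal (M' * (1 + j x)) ∂ν := by
          refine lintegral_congr fun x => ?_
          simp only [hNdef]
          rw [← ENNReal.tsum_mul_right]
          simp
      _ = N γ * C := lintegral_const_mul' _ _ (hNne γ)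
  -- conclusion
  calc ∫⁻ γ, (∫⁻ x in Λ, ∑' y : ↥(γ.1 ∩ Λ),
          ENNReal.ofReal (if 0 < r (y : X) (γ.erase (y : X)) then
            r x (γ.erase (y : X)) * r (y : X) (γ.erase (y : X)) ^ (-s) *
              c x (y : X) (γ.erase (y : X)) else 0) ∂ν) ^ 2 ∂μ
      ≤ ∫⁻ γ, (N γ * N γ) * (C * C) ∂μ := by
        refine lintegral_mono fun γ => ?_
        calc (∫⁻ x in Λ, ∑' y : ↥(γ.1 ∩ Λ),
              ENNReal.ofReal (if 0 < r (y : X) (γ.erase (y : X)) then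
                r x (γ.erase (y : X)) * r (y : X) (γ.erase (y : X)) ^ (-s) *
                  c x (y : X) (γ.erase (y : X)) else 0) ∂ν) ^ 2
            ≤ (N γ * C) ^ 2 := pow_le_pow_left' (hinner γ) 2
          _ = (N γ * N γ) * (C * C) := by ring
    _ = (∫⁻ γ, N γ * N γ ∂μ) * (C * C) :=
        lintegral_mul_const' _ _ (ENNReal.mul_ne_top hC.ne hC.ne)
    _ ≤ (J * (J + 1)) * (C * C) := mul_le_mul_left hN2 _
    _ < ⊤ := by
        refine ENNReal.mul_lt_top ?_ (ENNReal.mul_lt_top hC hC)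
        exact ENNReal.mul_lt_top hJ (ENNReal.add_lt_top.mpr ⟨hJ, ENNReal.one_lt_top⟩)

end
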